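/- Rational spectral factorization of a positive rational trigonometric density: Let P and Q be symmetric Laurent polynomials of degree at most m with P(z) > 0 and Q(z) > 0 for all z ∈ 𝕋. Then there exist complex polynomials a and b of degree at most m, each nonvanishing on the closed unit disk {z ∈ ℂ : |z| ≤ 1}, such that for all z ∈ 𝕋: P(z)/Q(z) = (a(z) · conj(a(z))) / (b(z) · conj(b(z))), where conj denotes complex conjugation of the value. In other words, the positive rational spectral density P/Q admits a rational spectral factor U(z) = a(z)/b(z) with P(z)/Q(z) = |U(z)|² on 𝕋 and with both U and 1/U having no poles in the closed unit disk. -/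

import Mathlib

noncomputable section

/-- Evaluation of the symmetric Laurent polynomial
`P(z) = p₀ + ∑_{k=1}^m p_k (z^k + z^{−k})` with coefficient vector `p`. -/
def lEval (m : ℕ) (p : Fin (m + 1) → ℝ) (z : ℂ) : ℂ :=
  (∑ k : Fin (m + 1), (p k : ℂ) * (z ^ (k : ℕ) + z⁻¹ ^ (k : ℕ))) - (p 0 : ℂ)

open Polynomial

def RR (m : ℕ) (p : Fin (m + 1) → ℝ) : Polynomial ℂ :=
  (∑ k : Fin (m + 1), C ((p k : ℂ)) * (X ^ (m + (k : ℕ)) + X ^ (m - (k : ℕ)))) - C ((p 0 : ℂ)) * X ^ m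

theorem reflect_sum {α : Type*} [CommSemiring α] (N : ℕ) {ι : Type*} (s : Finset ι)
    (f : ι → Polynomial α) :
    (∑ i ∈ s, f i).reflect N = ∑ i ∈ s, (f i).reflect N := by
  classical
  induction s using Finset.induction with
  | empty => simp
  | insert _ _ h ih => rw [Finset.sum_insert h, Finset.sum_insert h, reflect_add, ih]

theorem natDegree_RR (m : ℕ) (p : Fin (m + 1) → ℝ) : (RR m p).natDegree ≤ 2 * m := by
  unfold RR
  apply le_trans (natDegree_sub_le _ _)
  simp only [max_le_iff]
  constructor
  · apply le_trans (natDegree_sum_le _ _)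
    simp only [Finset.fold_max_le]
    refine ⟨by positivity, fun k _ => ?_⟩
    apply le_trans (natDegree_C_mul_le _ _)
    apply le_trans (natDegree_add_le _ _)
    simp only [natDegree_X_pow, max_le_iff]
    omega
  · apply le_trans (natDegree_C_mul_le _ _)
    simp [natDegree_X_pow]; omega

theorem eval_RR (m : ℕ) (p : Fin (m + 1) → ℝ) (z : ℂ) (hz : z ≠ 0) :
    eval z (RR m p) = z ^ m * lEval m p z := by
  unfold RR lEval
  simp only [eval_sub, eval_finset_sum, eval_mul, eval_C, eval_add, eval_pow, eval_X, mul_sub,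
    Finset.mul_sum]
  have h2 : ∀ k ∈ Finset.univ (α := Fin (m + 1)),
      (p k : ℂ) * (z ^ (m + (k : ℕ)) + z ^ (m - (k : ℕ)))
        = z ^ m * ((p k : ℂ) * (z ^ (k : ℕ) + z⁻¹ ^ (k : ℕ))) := by
    intro k _
    have hk : (k : ℕ) ≤ m := Nat.lt_succ_iff.mp k.2
    have : z ^ (m - (k : ℕ)) = z ^ m * z⁻¹ ^ (k : ℕ) := by
      rw [inv_pow, eq_comm, mul_inv_eq_iff_eq_mul₀ (pow_ne_zero _ hz), ← pow_add]
      congr 1; omega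
    rw [this]; ring
  rw [Finset.sum_congr rfl h2]
  ring

theorem map_conj_RR (m : ℕ) (p : Fin (m + 1) → ℝ) :
    (RR m p).map (starRingEnd ℂ) = RR m p := by
  unfold RR
  simp [Polynomial.map_sub, Polynomial.map_sum, Polynomial.map_mul, Polynomial.map_add,
    Polynomial.map_pow, map_C, map_X, Complex.conj_ofReal]

theorem reflect_RR (m : ℕ) (p : Fin (m + 1) → ℝ) :
    (RR m p).reflect (2 * m) = RR m p := by
  unfold RR
  rw [reflect_sub, reflect_sum]
  congr 1
  · apply Finset.sum_congr rfl
    intro k _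
    have hk : (k : ℕ) ≤ m := Nat.lt_succ_iff.mp k.2
    rw [mul_add, reflect_add, reflect_C_mul_X_pow, reflect_C_mul_X_pow,
      revAt_le (by omega), revAt_le (by omega)]
    have e1 : 2 * m - (m + (k : ℕ)) = m - (k : ℕ) := by omega
    have e2 : 2 * m - (m - (k : ℕ)) = m + (k : ℕ) := by omega
    rw [e1, e2, add_comm]
  · rw [reflect_C_mul, reflect_monomial, revAt_le (by omega)]
    have : 2 * m - m = m := by omega
    rw [this]




theorem reflect_pow_of_deg_le_one (q : Polynomial ℂ) (hq : q.natDegree ≤ 1) (k : ℕ) :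
    (q ^ k).reflect k = (q.reflect 1) ^ k := by
  induction k with
  | zero => simp [Polynomial.reflect_C]
  | succ k ih =>
      have : (k : ℕ) + 1 = 1 + k := by omega
      rw [pow_succ, mul_comm, this, reflect_mul q (q ^ k) hq
        (le_trans (natDegree_pow_le) (by nlinarith)), ih, pow_add, pow_one]

theorem rootMultiplicity_inv_le {R : Polynomial ℂ} (hR : R ≠ 0) {N : ℕ}
    (hdeg : R.natDegree ≤ N) (hrefl : R.reflect N = R) {w : ℂ} (hw : w ≠ 0) :
    R.rootMultiplicity w ≤ R.rootMultiplicity w⁻¹ := by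
  set k := R.rootMultiplicity w with hk
  obtain ⟨g, hg⟩ := Polynomial.pow_rootMultiplicity_dvd R w
  rw [← hk] at hg
  have hXk : ((X - C w) ^ k).natDegree = k := by
    simp [natDegree_pow]
  have hg0 : g ≠ 0 := by rintro rfl; simp [hg] at hR
  have hkN : k ≤ N := by
    refine le_trans ?_ hdeg
    calc k = ((X - C w) ^ k).natDegree := hXk.symm
    _ ≤ R.natDegree := Polynomial.natDegree_le_of_dvd ⟨g, hg⟩ hR
  have hgdeg : g.natDegree ≤ N - k := by
    have : R.natDegree = k + g.natDegree := by
      rw [hg, Polynomial.natDegree_mul (pow_ne_zero _ (X_sub_C_ne_zero w)) hg0, hXk]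
    omega
  have hrefl1 : (X - C w).reflect 1 = (-C w) * (X - C w⁻¹) := by
    have hX : (X : Polynomial ℂ).reflect 1 = 1 := by
      simpa using reflect_monomial 1 1 (R := ℂ)
    have h1 : (C w : Polynomial ℂ) * C w⁻¹ = 1 := by
      rw [← C_mul, mul_inv_cancel₀ hw, C_1]
    rw [reflect_sub, hX, Polynomial.reflect_C, pow_one]
    linear_combination -h1
  have key : R = ((-C w) * (X - C w⁻¹)) ^ k * g.reflect (N - k) := by
    conv_lhs => rw [← hrefl, hg]
    have hN : N = k + (N - k) := by omega
    rw [hN, reflect_mul _ _ (le_of_eq hXk) hgdeg,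
      reflect_pow_of_deg_le_one _ (by simp [natDegree_X_sub_C]) k, hrefl1]
    congr 2
    omega
  have hdvd : (X - C w⁻¹) ^ k ∣ R := by
    rw [key]
    exact Dvd.dvd.mul_right (by rw [mul_pow]; exact dvd_mul_left _ _) _
  exact (Polynomial.le_rootMultiplicity_iff hR).mpr hdvd

theorem rootMultiplicity_inv_eq {R : Polynomial ℂ} (hR : R ≠ 0) {N : ℕ}
    (hdeg : R.natDegree ≤ N) (hrefl : R.reflect N = R) {w : ℂ} (hw : w ≠ 0) :
    R.rootMultiplicity w⁻¹ = R.rootMultiplicity w := by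
  refine le_antisymm ?_ (rootMultiplicity_inv_le hR hdeg hrefl hw)
  have := rootMultiplicity_inv_le hR hdeg hrefl (inv_ne_zero hw)
  rwa [inv_inv] at this

theorem rootMultiplicity_conj_eq {R : Polynomial ℂ}
    (hconj : R.map (starRingEnd ℂ) = R) (w : ℂ) :
    R.rootMultiplicity ((starRingEnd ℂ) w) = R.rootMultiplicity w := by
  by_cases hR : R = 0
  · simp [hR]
  have hsplit : R.Splits := IsAlgClosed.splits R
  have h1 : (R.map (starRingEnd ℂ)).roots = R.roots.map (starRingEnd ℂ) :=
    hsplit.roots_map _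
  rw [hconj] at h1
  rw [← Polynomial.count_roots, ← Polynomial.count_roots]
  conv_lhs => rw [h1]
  exact Multiset.count_map_eq_count' _ _ (RingHom.injective _) w

open ComplexOrder in
theorem fejerRiesz (m : ℕ) (p : Fin (m + 1) → ℝ)
    (hp : ∀ z : ℂ, ‖z‖ = 1 → 0 < lEval m p z) :
    ∃ a : Polynomial ℂ, a.natDegree ≤ m ∧
      (∀ z : ℂ, ‖z‖ ≤ 1 → eval z a ≠ 0) ∧
      ∀ z : ℂ, ‖z‖ = 1 →
        lEval m p z = eval z a * (starRingEnd ℂ) (eval z a) := by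
  classical
  set R := RR m p with hRdef
  have hpne : ∀ z : ℂ, ‖z‖ = 1 → lEval m p z ≠ 0 := fun z hz => (hp z hz).ne'
  have hR0 : R ≠ 0 := by
    intro h
    have h2 := eval_RR m p 1 one_ne_zero
    rw [← hRdef, h] at h2
    simp only [eval_zero, one_pow, one_mul] at h2
    exact hpne 1 (by simp) h2.symm
  have hrefl : R.reflect (2 * m) = R := reflect_RR m p
  set n := R.natDegree with hn
  have hn2m : n ≤ 2 * m := natDegree_RR m p
  have hsplits : R.Splits := IsAlgClosed.splits R
  have hcard : Multiset.card R.roots = n := (Polynomial.splits_iff_card_roots.mp hsplits)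
  set T := R.roots with hT
  have hroot_ne : ∀ w : ℂ, ‖w‖ = 1 → w ∉ T := by
    intro w habs hw
    have hw0 : w ≠ 0 := by intro h; rw [h] at habs; simp at habs
    have h2 : eval w R = 0 := (Polynomial.isRoot_of_mem_roots hw)
    rw [eval_RR m p w hw0] at h2
    exact hpne w habs (by
      rcases mul_eq_zero.mp h2 with h3 | h3
      · exact absurd h3 (pow_ne_zero _ hw0)
      · exact h3)
  set σ : ℂ → ℂ := fun w => ((starRingEnd ℂ) w)⁻¹ with hσ
  have hσσ : ∀ w, σ (σ w) = w := by
    intro w; simp [hσ, map_inv₀, Complex.conj_conj]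
  have hσinj : Function.Injective σ := by
    intro a b h
    have := congrArg σ h; rwa [hσσ, hσσ] at this
  have hσabs : ∀ w : ℂ, ‖σ w‖ = (‖w‖)⁻¹ := by
    intro w; simp [hσ, map_inv₀]
  have hcount : ∀ w : ℂ, w ≠ 0 → Multiset.count (σ w) T = Multiset.count w T := by
    intro w hw
    rw [hT, Polynomial.count_roots, Polynomial.count_roots, hσ]
    have hcw : (starRingEnd ℂ) w ≠ 0 := by simpa using hw
    rw [rootMultiplicity_inv_eq hR0 hn2m (reflect_RR m p) hcw]
    exact rootMultiplicity_conj_eq (map_conj_RR m p) w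
  -- partition of roots
  set T' := T.filter (fun w => w ≠ 0) with hT'
  set Z := T.filter (fun w => ¬ w ≠ 0) with hZ
  set S := T'.filter (fun w => 1 < ‖w‖) with hSdef
  set W := T'.filter (fun w => ¬ 1 < ‖w‖) with hWdef
  have hpart1 : T' + Z = T := by
    rw [hT', hZ]; exact Multiset.filter_add_not _ T
  have hpart2 : S + W = T' := by
    rw [hSdef, hWdef]; exact Multiset.filter_add_not _ T'
  have hZ0 : ∀ w ∈ Z, w = 0 := by
    intro w hw
    have := Multiset.of_mem_filter hw
    simpa using this
  have hSmem : ∀ w ∈ S, 1 < ‖w‖ := fun w hw => (Multiset.mem_filter.mp hw).2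
  -- W = S.map σ
  have hWS : W = S.map σ := by
    ext a
    have hrhs : (S.map σ).count a = S.count (σ a) := by
      conv_lhs => rw [← hσσ a]
      exact Multiset.count_map_eq_count' σ _ hσinj (σ a)
    rw [hrhs, hWdef, hSdef, hT', Multiset.count_filter, Multiset.count_filter,
      Multiset.count_filter, Multiset.count_filter]
    by_cases ha0 : a = 0
    · subst ha0
      simp [hσ]
    · by_cases halt : ‖a‖ < 1
      · have h1 : ¬ 1 < ‖a‖ := by push_neg; linarith
        have h2 : 1 < ‖σ a‖ := by
          rw [hσabs]
          rw [one_lt_inv_iff₀]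
          exact ⟨norm_pos_iff.mpr ha0, halt⟩
        have h3 : σ a ≠ 0 := by
          intro h; rw [h] at h2; simp only [norm_zero] at h2; linarith
        rw [if_pos h1, if_pos ha0, if_pos h2, if_pos h3]
        exact (hcount a ha0).symm
      · by_cases haeq : ‖a‖ = 1
        · have h1 : a ∉ T := hroot_ne a haeq
          have h2 : σ a ∉ T := hroot_ne (σ a) (by rw [hσabs, haeq]; simp)
          rw [Multiset.count_eq_zero_of_notMem h1, Multiset.count_eq_zero_of_notMem h2]
          simp
        · have hgt : 1 < ‖a‖ := by
            rcases lt_trichotomy (‖a‖) 1 with h | h | h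
            · exact absurd h halt
            · exact absurd h haeq
            · exact h
          have h1 : ¬ (¬ 1 < ‖a‖) := by simpa using hgt
          have h2 : ¬ 1 < ‖σ a‖ := by
            rw [hσabs]
            push_neg
            rw [inv_le_one_iff₀]
            right; linarith
          simp [h1, h2]
  -- cards
  have hcZ : Multiset.card Z = 2 * m - n := by
    have hZcount : Multiset.card Z = R.rootMultiplicity 0 := by
      rw [← Polynomial.count_roots, ← hT, Multiset.count_eq_card_filter_eq, hZ]
      congr 1
      apply Multiset.filter_congr
      intro x _
      simp [eq_comm]
    rw [hZcount, Polynomial.rootMultiplicity_eq_natTrailingDegree']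
    have hle1 : R.natTrailingDegree ≤ 2 * m - n := by
      apply Polynomial.natTrailingDegree_le_of_ne_zero
      have : R.coeff (2 * m - n) = R.coeff n := by
        conv_lhs => rw [← hrefl]
        rw [Polynomial.coeff_reflect, Polynomial.revAt_le (by omega)]
        congr 1
        omega
      rw [this, hn, Polynomial.coeff_natDegree]
      exact Polynomial.leadingCoeff_ne_zero.mpr hR0
    have hle2 : 2 * m - n ≤ R.natTrailingDegree := by
      apply Polynomial.le_natTrailingDegree hR0
      intro i hi
      have : R.coeff i = R.coeff (2 * m - i) := by
        conv_lhs => rw [← hrefl]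
        rw [Polynomial.coeff_reflect, Polynomial.revAt_le (by omega)]
      rw [this]
      apply Polynomial.coeff_eq_zero_of_natDegree_lt
      omega
    omega
  set d := Multiset.card S with hd
  have hcT : Multiset.card T = n := hcard
  have hcW : Multiset.card W = d := by rw [hWS, Multiset.card_map]
  have hsum : d + d + (2 * m - n) = n := by
    have := congrArg Multiset.card hpart1
    rw [Multiset.card_add] at this
    have h2 := congrArg Multiset.card hpart2
    rw [Multiset.card_add] at h2
    omega
  have hdm : 2 * m - n + d = m ∧ d ≤ m := by omega
  -- the polynomial A
  set A := (S.map fun w => X - C w).prod with hA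
  have hAdeg : A.natDegree = d := by
    rw [hA, Polynomial.natDegree_multiset_prod_X_sub_C_eq_card]
  have hAeval : ∀ z : ℂ, eval z A = (S.map fun w => z - w).prod := by
    intro z
    rw [hA, Polynomial.eval_multiset_prod, Multiset.map_map]
    congr 1
    apply Multiset.map_congr rfl
    intro w _
    simp
  have hAne : ∀ z : ℂ, ‖z‖ ≤ 1 → eval z A ≠ 0 := by
    intro z hz
    rw [hAeval]
    apply Multiset.prod_ne_zero
    intro h0
    obtain ⟨w, hw, hw2⟩ := Multiset.mem_map.mp (by exact h0)
    have h1 : 1 < ‖w‖ := hSmem w hw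
    have : w = z := by
      have := sub_eq_zero.mp hw2
      exact this.symm
    rw [this] at h1
    linarith
  -- factorization and main identity
  have hfact : C R.leadingCoeff * (T.map fun w => X - C w).prod = R :=
    Polynomial.C_leadingCoeff_mul_prod_multiset_X_sub_C hcard
  set c := R.leadingCoeff with hc
  set KS := (S.map fun w => ((starRingEnd ℂ) w)⁻¹).prod with hKS
  set κ := c * (-1 : ℂ) ^ d * KS with hκ
  have hZrep : Z = Multiset.replicate (2 * m - n) 0 := by
    rw [← hcZ]
    exact Multiset.eq_replicate_card.mpr hZ0
  have hmain : ∀ z : ℂ, ‖z‖ = 1 →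
      lEval m p z = κ * (eval z A * (starRingEnd ℂ) (eval z A)) := by
    intro z hz
    have hz0 : z ≠ 0 := by intro h; rw [h] at hz; simp at hz
    have hconjz : (starRingEnd ℂ) z = z⁻¹ := by
      have h1 : z * (starRingEnd ℂ) z = 1 := by
        rw [Complex.mul_conj, Complex.normSq_eq_norm_sq, hz]
        norm_num
      exact eq_inv_of_mul_eq_one_left (by rw [mul_comm]; exact h1)
    have hevalR : eval z R = c * (T.map fun w => z - w).prod := by
      conv_lhs => rw [← hfact]
      rw [eval_mul, eval_C, Polynomial.eval_multiset_prod, Multiset.map_map]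
      congr 2
      apply Multiset.map_congr rfl
      intro w _
      simp
    have hZprod : (Z.map fun w => z - w).prod = z ^ (2 * m - n) := by
      rw [hZrep, Multiset.map_replicate, Multiset.prod_replicate, sub_zero]
    have hfac : ∀ w ∈ S, z - σ w = (starRingEnd ℂ) (z - w) * (-z * ((starRingEnd ℂ) w)⁻¹) := by
      intro w hw
      have hcw : (starRingEnd ℂ) w ≠ 0 := by
        intro h
        have := hSmem w hw
        rw [show w = 0 by simpa using congrArg (starRingEnd ℂ) h] at this
        simp at this
        linarith
      rw [map_sub, hconjz, hσ]
      field_simp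
      ring
    have hWprod : (W.map fun w => z - w).prod
        = (starRingEnd ℂ) (eval z A) * ((-z) ^ d * KS) := by
      rw [hWS, Multiset.map_map]
      have : (S.map fun w => (fun w => z - w) (σ w))
          = S.map fun w => (starRingEnd ℂ) (z - w) * (-z * ((starRingEnd ℂ) w)⁻¹) :=
        Multiset.map_congr rfl hfac
      rw [Function.comp_def, this, Multiset.prod_map_mul]
      congr 1
      · rw [hAeval, map_multiset_prod, Multiset.map_map]
        rfl
      · rw [Multiset.prod_map_mul, hKS]
        congr 1
        rw [Multiset.map_const', Multiset.prod_replicate, hd]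
    have hprodT : (T.map fun w => z - w).prod
        = eval z A * ((starRingEnd ℂ) (eval z A) * ((-z) ^ d * KS)) * z ^ (2 * m - n) := by
      rw [← hpart1, ← hpart2, Multiset.map_add, Multiset.prod_add, Multiset.map_add,
        Multiset.prod_add, hZprod, hWprod, hAeval]
    have hzpow : (-z) ^ d * z ^ (2 * m - n) = (-1 : ℂ) ^ d * z ^ m := by
      rw [neg_pow, mul_assoc, ← pow_add]
      congr 2
      omega
    have hkey : z ^ m * lEval m p z = z ^ m * (κ * (eval z A * (starRingEnd ℂ) (eval z A))) := by
      have hevR := eval_RR m p z hz0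
      calc z ^ m * lEval m p z = eval z R := hevR.symm
        _ = c * ((T.map fun w => z - w)).prod := hevalR
        _ = c * (eval z A * ((starRingEnd ℂ) (eval z A) * ((-z) ^ d * KS)) * z ^ (2 * m - n)) := by
            rw [hprodT]
        _ = z ^ m * (κ * (eval z A * (starRingEnd ℂ) (eval z A))) := by
            rw [hκ]
            linear_combination (c * eval z A * (starRingEnd ℂ) (eval z A) * KS) * hzpow
    exact mul_left_cancel₀ (pow_ne_zero m hz0) hkey
  -- positivity of κ
  have h1 : lEval m p 1 = κ * (eval 1 A * (starRingEnd ℂ) (eval 1 A)) :=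
    hmain 1 (by simp)
  have hA1 : eval 1 A ≠ 0 := hAne 1 (by simp)
  have hN : (0 : ℝ) < Complex.normSq (eval 1 A) := Complex.normSq_pos.mpr hA1
  have hmc : eval 1 A * (starRingEnd ℂ) (eval 1 A) = (Complex.normSq (eval 1 A) : ℂ) :=
    Complex.mul_conj _
  have hlt := hp 1 (by simp)
  obtain ⟨hre, him⟩ := Complex.lt_def.mp hlt
  simp only [Complex.zero_re, Complex.zero_im] at hre him
  have hκval : κ = (((lEval m p 1).re / Complex.normSq (eval 1 A) : ℝ) : ℂ) := by
    have h2 : κ * (Complex.normSq (eval 1 A) : ℂ) = lEval m p 1 := by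
      rw [← hmc, ← h1]
    have h3 : lEval m p 1 = (((lEval m p 1).re : ℝ) : ℂ) := by
      apply Complex.ext <;> simp [← him]
    rw [Complex.ofReal_div, ← h3, eq_div_iff (show (Complex.normSq (eval 1 A) : ℂ) ≠ 0 by
      exact_mod_cast hN.ne')]
    exact h2
  set r := Real.sqrt ((lEval m p 1).re / Complex.normSq (eval 1 A)) with hr
  have hrpos : 0 < r := Real.sqrt_pos.mpr (by positivity)
  have hrr : r * r = (lEval m p 1).re / Complex.normSq (eval 1 A) :=
    Real.mul_self_sqrt (by positivity)
  refine ⟨C (r : ℂ) * A, ?_, ?_, ?_⟩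
  · exact le_trans (Polynomial.natDegree_C_mul_le _ _) (by rw [hAdeg]; exact hdm.2)
  · intro z hz
    rw [eval_mul, eval_C]
    exact mul_ne_zero (by exact_mod_cast hrpos.ne') (hAne z hz)
  · intro z hz
    rw [eval_mul, eval_C, map_mul, Complex.conj_ofReal, hmain z hz, hκval, ← hrr]
    push_cast
    ring


open ComplexOrder in
/-- Rational spectral factorization of a positive rational trigonometric density:
if `P` and `Q` are symmetric Laurent polynomials of degree at most `m`, strictly positive
on the unit circle, then `P/Q = |a|²/|b|²` on the circle for polynomials `a`, `b` of degree
at most `m` that do not vanish on the closed unit disk. -/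
theorem stmt_17 (m : ℕ) (p q : Fin (m + 1) → ℝ)
    (hp : ∀ z : ℂ, ‖z‖ = 1 → 0 < lEval m p z)
    (hq : ∀ z : ℂ, ‖z‖ = 1 → 0 < lEval m q z) :
    ∃ a b : Polynomial ℂ, a.natDegree ≤ m ∧ b.natDegree ≤ m ∧
      (∀ z : ℂ, ‖z‖ ≤ 1 → Polynomial.eval z a ≠ 0) ∧
      (∀ z : ℂ, ‖z‖ ≤ 1 → Polynomial.eval z b ≠ 0) ∧
      ∀ z : ℂ, ‖z‖ = 1 →
        lEval m p z / lEval m q z =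
          (Polynomial.eval z a * (starRingEnd ℂ) (Polynomial.eval z a)) /
            (Polynomial.eval z b * (starRingEnd ℂ) (Polynomial.eval z b)) := by
  obtain ⟨a, ha1, ha2, ha3⟩ := fejerRiesz m p hp
  obtain ⟨b, hb1, hb2, hb3⟩ := fejerRiesz m q hq
  exact ⟨a, b, ha1, hb1, ha2, hb2, fun z hz => by rw [← ha3 z hz, ← hb3 z hz]⟩
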